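/- Let F(x) = (((x^{2^n−2} + 1)^{2^n−2} + γ)^{2^n−2}) on GF(2^n) with γ ∉ {0, 1}. Then F = A₄⁻¹ ∘ (Inv ∘ σ) ∘ A₃⁻¹ where σ is the 3-cycle permutation (0, 1, γ), A₃(x) = (x + γ)/(γ + 1), and A₄(x) = (γ+1)x + 1; equivalently, A₄ ∘ F ∘ A₃ = Inv ∘ (0,1,γ). -/

import Mathlib

open scoped Classical

/-- The 3-cycle `(0, 1, γ)` : sends `0 ↦ 1`, `1 ↦ γ`, `γ ↦ 0`, fixes all other points. -/
noncomputable def cyc (n : ℕ) (γ : GaloisField 2 n) :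
    GaloisField 2 n → GaloisField 2 n :=
  fun x => if x = 0 then 1 else if x = 1 then γ else if x = γ then 0 else x

theorem stmt_10 (n : ℕ) (γ : GaloisField 2 n) (h0 : γ ≠ 0) (h1 : γ ≠ 1) :
    ∀ x : GaloisField 2 n,
      (γ + 1) * ((((((x + γ) / (γ + 1))⁻¹ + 1)⁻¹ + γ)⁻¹ : GaloisField 2 n)) + 1 =
        (cyc n γ x)⁻¹ := by
  have h2 : (2 : GaloisField 2 n) = 0 := by
    have := CharP.cast_eq_zero (GaloisField 2 n) 2
    simpa using this
  have hc : γ + 1 ≠ 0 := fun h => h1 (by linear_combination h - h2)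
  intro x
  by_cases hx0 : x = 0
  · subst hx0
    simp only [cyc, if_pos rfl, zero_add, inv_one]
    have e1 : (γ / (γ + 1))⁻¹ = (γ + 1) / γ := inv_div _ _
    have e2 : (γ + 1) / γ + 1 = 1 / γ := by
      field_simp
      linear_combination γ * h2
    rw [e1, e2, one_div, inv_inv]
    have : γ + γ = 0 := by linear_combination γ * h2
    rw [this, inv_zero, mul_zero, zero_add]
    simp
  · by_cases hx1 : x = 1
    · subst hx1
      simp only [cyc, if_neg one_ne_zero, if_pos rfl, if_true]
      have e1 : ((1 + γ) / (γ + 1))⁻¹ = 1 := by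
        rw [add_comm, div_self hc, inv_one]
      rw [e1]
      have : (1 : GaloisField 2 n) + 1 = 0 := by linear_combination h2
      rw [this, inv_zero, zero_add]
      field_simp
      linear_combination γ * h2
    · by_cases hxg : x = γ
      · subst hxg
        simp only [cyc, if_neg hx0, if_neg hx1, if_pos rfl, inv_zero]
        have : x + x = 0 := by linear_combination x * h2
        rw [this, zero_div, inv_zero, zero_add, inv_one, add_comm (1:GaloisField 2 n) x,
          mul_inv_cancel₀ hc]
        simp
        linear_combination h2
      · simp only [cyc, if_neg hx0, if_neg hx1, if_neg hxg]
        have hxg' : x + γ ≠ 0 := fun h => hxg (by linear_combination h - γ * h2)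
        have hx1' : x + 1 ≠ 0 := fun h => hx1 (by linear_combination h - h2)
        have e1 : ((x + γ) / (γ + 1))⁻¹ = (γ + 1) / (x + γ) := inv_div _ _
        have e2 : (γ + 1) / (x + γ) + 1 = (x + 1) / (x + γ) := by
          field_simp
          linear_combination γ * h2
        have e3 : ((x + 1) / (x + γ))⁻¹ = (x + γ) / (x + 1) := inv_div _ _
        have e4 : (x + γ) / (x + 1) + γ = (γ + 1) * x / (x + 1) := by
          field_simp
          linear_combination γ * h2
        have e5 : ((γ + 1) * x / (x + 1))⁻¹ = (x + 1) / ((γ + 1) * x) := inv_div _ _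
        rw [e1, e2, e3, e4, e5]
        field_simp
        linear_combination x * h2
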